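/- Let q ∈ ℂ be nonzero and not a root of unity (qⁿ ≠ 1 for every n ≥ 1). Let F = ℂ(s,t) be the field of rational functions in two independent variables s and t over ℂ, and let τ : F → F be the ℂ-algebra field automorphism determined by τ(s) = s/q and τ(t) = t. Let R be an element of the subfield ℂ(s) of rational functions in s alone, and let h be a nonzero element of the subfield ℂ(t) of rational functions in t alone. If there exists f₁ ∈ F with f₁ − τ(f₁) = R·h, then there exists f ∈ ℂ(s) with f − τ(f) = R. -/

import Mathlib

set_option maxHeartbeats 1000000
set_option synthInstance.maxHeartbeats 400000

/-- The field `ℂ(s,t)` of rational functions in two independent variables over `ℂ`,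
realized as the fraction field of the polynomial ring `ℂ[s,t]`. -/
noncomputable abbrev RatFunc2 : Type := FractionRing (MvPolynomial (Fin 2) ℂ)

/-- The variable `s` of `ℂ(s,t)`. -/
noncomputable def varS : RatFunc2 :=
  algebraMap (MvPolynomial (Fin 2) ℂ) RatFunc2 (MvPolynomial.X 0)

/-- The variable `t` of `ℂ(s,t)`. -/
noncomputable def varT : RatFunc2 :=
  algebraMap (MvPolynomial (Fin 2) ℂ) RatFunc2 (MvPolynomial.X 1)

open MvPolynomial in
/-- The substitution `s ↦ s/q`, `t ↦ t` on the polynomial ring. -/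
noncomputable def tau' (q : ℂ) : MvPolynomial (Fin 2) ℂ →ₐ[ℂ] MvPolynomial (Fin 2) ℂ :=
  aeval ![C q⁻¹ * X 0, X 1]

open MvPolynomial in
/-- The partial evaluation `t ↦ t₀` on the polynomial ring. -/
noncomputable def evT (t₀ : ℂ) : MvPolynomial (Fin 2) ℂ →ₐ[ℂ] MvPolynomial (Fin 2) ℂ :=
  aeval ![X 0, C t₀]

open MvPolynomial

theorem tau_algebraMap (q : ℂ) (τ : RatFunc2 ≃ₐ[ℂ] RatFunc2)
    (hτs : τ varS = varS / algebraMap ℂ RatFunc2 q)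
    (hτt : τ varT = varT) (p : MvPolynomial (Fin 2) ℂ) :
    τ (algebraMap (MvPolynomial (Fin 2) ℂ) RatFunc2 p)
      = algebraMap (MvPolynomial (Fin 2) ℂ) RatFunc2 (tau' q p) := by
  have key : (τ.toAlgHom.comp (IsScalarTower.toAlgHom ℂ (MvPolynomial (Fin 2) ℂ) RatFunc2))
      = (IsScalarTower.toAlgHom ℂ (MvPolynomial (Fin 2) ℂ) RatFunc2).comp (tau' q) := by
    apply MvPolynomial.algHom_ext
    intro i
    have h1 : algebraMap (MvPolynomial (Fin 2) ℂ) RatFunc2 (C q⁻¹)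
        = (algebraMap ℂ RatFunc2 q)⁻¹ := by
      rw [← map_inv₀, ← MvPolynomial.algebraMap_eq, ← IsScalarTower.algebraMap_apply]
    match i with
    | 0 =>
      simp only [AlgHom.comp_apply, IsScalarTower.toAlgHom_apply, AlgEquiv.toAlgHom_eq_coe,
        AlgHom.coe_coe, tau', aeval_X, Matrix.cons_val_zero, map_mul, h1]
      change τ (algebraMap (MvPolynomial (Fin 2) ℂ) RatFunc2 (X 0)) = _
      rw [show algebraMap (MvPolynomial (Fin 2) ℂ) RatFunc2 (X 0) = varS from rfl, hτs,
        div_eq_mul_inv, mul_comm]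
    | 1 =>
      simp only [AlgHom.comp_apply, IsScalarTower.toAlgHom_apply, AlgEquiv.toAlgHom_eq_coe,
        AlgHom.coe_coe, tau', aeval_X, Matrix.cons_val_one, Matrix.head_cons]
      exact hτt
  exact congrFun (congrArg (fun f => f.toFun) key) p

theorem evT_tau' (q : ℂ) (t₀ : ℂ) (p : MvPolynomial (Fin 2) ℂ) :
    evT t₀ (tau' q p) = tau' q (evT t₀ p) := by
  have key : (evT t₀).comp (tau' q) = (tau' q).comp (evT t₀) := by
    apply MvPolynomial.algHom_ext
    intro i
    match i with
    | 0 => simp [evT, tau']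
    | 1 => simp [evT, tau']
  exact congrFun (congrArg (fun f => f.toFun) key) p

theorem tau_fix (τ : RatFunc2 ≃ₐ[ℂ] RatFunc2) (hτt : τ varT = varT)
    {x : RatFunc2} (hx : x ∈ IntermediateField.adjoin ℂ ({varT} : Set RatFunc2)) :
    τ x = x := by
  induction hx using IntermediateField.adjoin_induction with
  | mem x hx => rw [Set.mem_singleton_iff.mp hx]; exact hτt
  | algebraMap x => exact τ.commutes x
  | add x y _ _ hx hy => rw [map_add, hx, hy]
  | inv x _ hx => rw [map_inv₀, hx]
  | mul x y _ _ hx hy => rw [map_mul, hx, hy]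

theorem exists_t0 {w : MvPolynomial (Fin 2) ℂ} (hw : w ≠ 0) : ∃ t₀ : ℂ, evT t₀ w ≠ 0 := by
  by_contra hc
  push_neg at hc
  apply hw
  apply MvPolynomial.funext (q := 0)
  intro v
  have key : ∀ p, eval v (evT (v 1) p) = eval v p := by
    intro p
    have : (eval v).comp ((evT (v 1)) : MvPolynomial (Fin 2) ℂ →+* MvPolynomial (Fin 2) ℂ)
        = eval v := by
      apply MvPolynomial.ringHom_ext
      · intro a; simp [evT]
      · intro i
        match i with
        | 0 => simp [evT]
        | 1 => simp [evT]
    exact congrFun (congrArg (fun f => f.toFun) this) p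
  rw [← key w, hc (v 1)]

theorem mem_adjoinS (t₀ : ℂ) (p : MvPolynomial (Fin 2) ℂ) :
    algebraMap (MvPolynomial (Fin 2) ℂ) RatFunc2 (evT t₀ p)
      ∈ IntermediateField.adjoin ℂ ({varS} : Set RatFunc2) := by
  have key : (IsScalarTower.toAlgHom ℂ (MvPolynomial (Fin 2) ℂ) RatFunc2).comp (evT t₀)
      = aeval ![varS, algebraMap ℂ RatFunc2 t₀] := by
    apply MvPolynomial.algHom_ext
    intro i
    match i with
    | 0 => simp [evT]; rfl
    | 1 =>
      simp [evT]
      rw [← MvPolynomial.algebraMap_eq, ← IsScalarTower.algebraMap_apply]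
  have h1 : algebraMap (MvPolynomial (Fin 2) ℂ) RatFunc2 (evT t₀ p)
      = aeval ![varS, algebraMap ℂ RatFunc2 t₀] p :=
    congrFun (congrArg (fun f => f.toFun) key) p
  rw [h1]
  have h2 : aeval ![varS, algebraMap ℂ RatFunc2 t₀] p
      ∈ Algebra.adjoin ℂ (Set.range ![varS, algebraMap ℂ RatFunc2 t₀]) := by
    rw [Algebra.adjoin_range_eq_range_aeval]
    exact ⟨p, rfl⟩
  have h3 : Algebra.adjoin ℂ (Set.range ![varS, algebraMap ℂ RatFunc2 t₀])
      ≤ (IntermediateField.adjoin ℂ ({varS} : Set RatFunc2)).toSubalgebra := by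
    apply Algebra.adjoin_le
    rintro x ⟨i, rfl⟩
    match i with
    | 0 => exact IntermediateField.subset_adjoin _ _ rfl
    | 1 => exact IntermediateField.algebraMap_mem _ _
  exact h3 h2

theorem decoupling_descends_to_single_variable
    (q : ℂ) (hq0 : q ≠ 0) (hqroot : ∀ n : ℕ, 1 ≤ n → q ^ n ≠ 1)
    (τ : RatFunc2 ≃ₐ[ℂ] RatFunc2)
    (hτs : τ varS = varS / algebraMap ℂ RatFunc2 q)
    (hτt : τ varT = varT)
    (R : RatFunc2) (hR : R ∈ IntermediateField.adjoin ℂ ({varS} : Set RatFunc2))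
    (h : RatFunc2) (hh : h ∈ IntermediateField.adjoin ℂ ({varT} : Set RatFunc2))
    (hh0 : h ≠ 0)
    (hf₁ : ∃ f₁ : RatFunc2, f₁ - τ f₁ = R * h) :
    ∃ f ∈ IntermediateField.adjoin ℂ ({varS} : Set RatFunc2), f - τ f = R := by
  classical
  obtain ⟨f₁, hfe⟩ := hf₁
  set A := algebraMap (MvPolynomial (Fin 2) ℂ) RatFunc2 with hA
  have hinj : Function.Injective A := IsFractionRing.injective _ _
  have hτh : τ h = h := tau_fix τ hτt hh
  have hg : (f₁ / h) - τ (f₁ / h) = R := by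
    rw [map_div₀, hτh, div_sub_div_same, hfe, mul_div_assoc, div_self hh0, mul_one]
  -- representation of R
  obtain ⟨r, s, hrs⟩ := (IntermediateField.mem_adjoin_simple_iff ℂ R).mp hR
  by_cases hb0 : Polynomial.aeval varS s = 0
  · refine ⟨0, zero_mem _, ?_⟩
    rw [map_zero, sub_zero, hrs, hb0, div_zero]
  set a : MvPolynomial (Fin 2) ℂ := Polynomial.aeval (X 0) r with ha
  set b : MvPolynomial (Fin 2) ℂ := Polynomial.aeval (X 0) s with hbdef
  have hAa : A a = Polynomial.aeval varS r :=
    (Polynomial.aeval_algHom_apply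
      (IsScalarTower.toAlgHom ℂ (MvPolynomial (Fin 2) ℂ) RatFunc2) (X 0) r).symm
  have hAb : A b = Polynomial.aeval varS s :=
    (Polynomial.aeval_algHom_apply
      (IsScalarTower.toAlgHom ℂ (MvPolynomial (Fin 2) ℂ) RatFunc2) (X 0) s).symm
  have hB : A b ≠ 0 := by rw [hAb]; exact hb0
  have hRab : R = A a / A b := by rw [hAa, hAb, hrs]
  -- representation of g
  obtain ⟨p, w, hwmem, hpw⟩ := IsFractionRing.div_surjective (A := MvPolynomial (Fin 2) ℂ) (f₁ / h)
  have hw0 : w ≠ 0 := nonZeroDivisors.ne_zero hwmem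
  have hW : A w ≠ 0 := fun hc => hw0 (hinj (by rwa [map_zero]))
  have hW' : A (tau' q w) ≠ 0 := by
    rw [← tau_algebraMap q τ hτs hτt]
    exact fun hc => hW (τ.injective (by rw [hc, map_zero]))
  -- the equation, in terms of polynomial images
  have heq : A p / A w - A (tau' q p) / A (tau' q w) = A a / A b := by
    rw [← tau_algebraMap q τ hτs hτt, ← tau_algebraMap q τ hτs hτt, ← map_div₀ τ, hpw, hg, hRab]
  -- clear denominators and descend to polynomials
  have hpoly : p * tau' q w * b - tau' q p * w * b = a * w * tau' q w := by
    apply hinj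
    field_simp at heq
    simp only [map_sub, map_mul]
    linear_combination heq
  -- evaluate t ↦ t₀
  obtain ⟨t₀, hEw⟩ := exists_t0 hw0
  have hEa : evT t₀ a = a := by
    rw [ha, ← Polynomial.aeval_algHom_apply (evT t₀) (X 0) r]
    simp [evT]
  have hEb : evT t₀ b = b := by
    rw [hbdef, ← Polynomial.aeval_algHom_apply (evT t₀) (X 0) s]
    simp [evT]
  have hE := congrArg (evT t₀) hpoly
  simp only [map_sub, map_mul, evT_tau', hEa, hEb] at hE
  set P := evT t₀ p
  set W := evT t₀ w
  have hAW : A W ≠ 0 := fun hc => hEw (hinj (by rwa [map_zero]))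
  have hAW' : A (tau' q W) ≠ 0 := by
    rw [← tau_algebraMap q τ hτs hτt]
    exact fun hc => hAW (τ.injective (by rw [hc, map_zero]))
  refine ⟨A P / A W, div_mem (mem_adjoinS t₀ p) (mem_adjoinS t₀ w), ?_⟩
  rw [map_div₀, tau_algebraMap q τ hτs hτt, tau_algebraMap q τ hτs hτt, hRab]
  have hEF := congrArg A hE
  simp only [map_sub, map_mul] at hEF
  rw [← hA, div_sub_div _ _ hAW hAW', div_eq_div_iff (mul_ne_zero hAW hAW') hB]
  linear_combination hEF
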